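/- Let V be a finite-dimensional real normed vector space and let T : V → V be a continuous linear endomorphism with operator norm ‖T‖ < 2π. If the exponential exp(T) = ∑_{k≥0} T^k / k! equals the identity map, then T = 0. -/

import Mathlib

open Polynomial NormedSpace

attribute [local instance] Matrix.linftyOpNormedRing Matrix.linftyOpNormedAlgebra

/-- A nilpotent element of a complex Banach algebra whose exponential is `1` must be zero. -/
lemma eq_zero_of_isNilpotent_of_exp_eq_one {A : Type*} [NormedRing A] [NormedAlgebra ℂ A]
    [CompleteSpace A] (N : A) (hnil : IsNilpotent N) (h : NormedSpace.exp N = 1) : N = 0 := by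
  classical
  by_contra hN
  have hex : ∃ m, N ^ m = 0 := hnil
  set k := Nat.find hex with hkdef
  have hk0 : N ^ k = 0 := Nat.find_spec hex
  have hkmin : ∀ j < k, N ^ j ≠ 0 := fun j hj => Nat.find_min hex hj
  have hk2 : 2 ≤ k := by
    by_contra hlt
    push_neg at hlt
    interval_cases k
    · -- N ^ 0 = 0, i.e. (1 : A) = 0
      have h1 : (1 : A) = 0 := by simpa using hk0
      exact hN (by calc N = N * 1 := (mul_one N).symm
                    _ = 0 := by rw [h1, mul_zero])
    · exact hN (by simpa using hk0)
  set j := k - 2 with hjdef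
  have hjk : j + 2 = k := Nat.sub_add_cancel hk2
  have hmul : N ^ j * NormedSpace.exp N = N ^ j + N ^ (j + 1) := by
    have hexp : NormedSpace.exp N = ∑' n : ℕ, ((n.factorial : ℂ))⁻¹ • N ^ n :=
      congrFun (NormedSpace.exp_eq_tsum (𝕂 := ℂ) (𝔸 := A)) N
    have hsum : Summable fun n : ℕ => ((n.factorial : ℂ))⁻¹ • N ^ n :=
      NormedSpace.expSeries_summable' (𝕂 := ℂ) N
    rw [hexp, ← hsum.tsum_mul_left (N ^ j)]
    have hzero : ∀ n ∉ Finset.range 2, N ^ j * (((n.factorial : ℂ))⁻¹ • N ^ n) = 0 := by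
      intro n hn
      rw [Finset.mem_range, not_lt] at hn
      have hpow : N ^ j * N ^ n = 0 := by
        rw [← pow_add]
        exact pow_eq_zero_of_le (by omega) hk0
      rw [mul_smul_comm, hpow, smul_zero]
    rw [tsum_eq_sum hzero]
    simp [Finset.sum_range_succ, mul_smul_comm, pow_succ, Nat.factorial]
  rw [h, mul_one] at hmul
  have : N ^ (j + 1) = 0 := by
    have := hmul.symm
    rwa [add_eq_left] at this
  exact hkmin (j + 1) (by omega) this

/-- If `T` is a continuous linear endomorphism of a finite-dimensional real normed vector space
with operator norm `‖T‖ < 2π` and `exp T = id`, then `T = 0`. -/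
theorem exp_eq_one_of_norm_lt_two_pi {V : Type*} [NormedAddCommGroup V] [NormedSpace ℝ V]
    [FiniteDimensional ℝ V] (T : V →L[ℝ] V) (hT : ‖T‖ < 2 * Real.pi)
    (h : NormedSpace.exp T = 1) : T = 0 := by
  classical
  rcases subsingleton_or_nontrivial V with hV | hV
  · exact Subsingleton.elim T 0
  by_cases hT0 : T = 0
  · exact hT0
  have hTpos : 0 < ‖T‖ := norm_pos_iff.mpr hT0
  set n := Module.finrank ℝ V with hn
  have hnpos : 0 < n := Module.finrank_pos
  haveI : Nonempty (Fin n) := ⟨⟨0, hnpos⟩⟩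
  let b : Module.Basis (Fin n) ℝ V := Module.finBasis ℝ V
  -- the compound algebra morphism into complex matrices
  let ψ : (V →L[ℝ] V) →+* Matrix (Fin n) (Fin n) ℂ :=
    ((AlgHom.mapMatrix (m := Fin n) Complex.ofRealAm).toRingHom.comp
      (LinearMap.toMatrixAlgEquiv b).toAlgHom.toRingHom).comp
      ContinuousLinearMap.toLinearMapRingHom
  let ψℓ : (V →L[ℝ] V) →ₗ[ℝ] Matrix (Fin n) (Fin n) ℂ :=
    ((AlgHom.mapMatrix (m := Fin n) Complex.ofRealAm).toLinearMap.comp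
      (LinearMap.toMatrixAlgEquiv b).toLinearMap).comp
      (ContinuousLinearMap.coeLM ℝ)
  have hψℓ : ⇑ψ = ⇑ψℓ := rfl
  have hcont : Continuous ψ := by
    rw [hψℓ]
    exact ψℓ.continuous_of_finiteDimensional
  have hinj : Function.Injective ψ := by
    intro x y hxy
    have h1 : ((LinearMap.toMatrixAlgEquiv b) (x : V →ₗ[ℝ] V)).map Complex.ofReal
        = ((LinearMap.toMatrixAlgEquiv b) (y : V →ₗ[ℝ] V)).map Complex.ofReal := hxy
    have h2 := Matrix.map_injective Complex.ofReal_injective h1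
    have h3 := (LinearMap.toMatrixAlgEquiv b).injective h2
    exact ContinuousLinearMap.coe_injective h3
  set M := ψ T with hM
  -- the norm bound for ψ
  obtain ⟨Cb, hC1, hCb⟩ : ∃ Cb, 1 ≤ Cb ∧ ∀ x : V →L[ℝ] V, ‖ψ x‖ ≤ Cb * ‖x‖ := by
    let ψL := @LinearMap.toContinuousLinearMap ℝ _ (V →L[ℝ] V) _ _ _ _ _ (Matrix (Fin n) (Fin n) ℂ) _ _
      PseudoMetricSpace.toUniformSpace.toTopologicalSpace _ _ _ _ _ ψℓ
    refine ⟨max ‖ψL‖ 1, le_max_right _ _, fun x => ?_⟩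
    calc ‖ψ x‖ = ‖ψL x‖ := by rw [hψℓ]; rfl
      _ ≤ ‖ψL‖ * ‖x‖ := ψL.le_opNorm x
      _ ≤ max ‖ψL‖ 1 * ‖x‖ := by
          gcongr; exact le_max_left _ _
  haveI : CompleteSpace (Matrix (Fin n) (Fin n) ℂ) := FiniteDimensional.complete ℂ _
  -- exp of M is one
  have hexpM : NormedSpace.exp M = 1 := by
    letI : NormedAlgebra ℚ (V →L[ℝ] V) := .restrictScalars ℚ ℝ _
    have hmap := map_exp ψ hcont T
    rw [h, map_one] at hmap
    exact hmap.symm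
  -- the spectrum of M is {0}
  have hspec : spectrum ℂ M ⊆ {0} := by
    intro lam hlam
    have hexp1 : Complex.exp lam = 1 := by
      have hmem : NormedSpace.exp lam ∈ spectrum ℂ (NormedSpace.exp M) := spectrum.exp_mem_exp M hlam
      rw [hexpM, spectrum.one_eq] at hmem
      simpa [Complex.exp_eq_exp_ℂ] using hmem
    obtain ⟨m, hm⟩ := Complex.exp_eq_one_iff.mp hexp1
    rcases eq_or_ne m 0 with rfl | hm0
    · simp only [Int.cast_zero, zero_mul] at hm
      simp [hm]
    · exfalso
      have hlamnorm : 2 * Real.pi ≤ ‖lam‖ := by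
        rw [hm]
        rw [norm_mul, norm_mul, norm_mul, Complex.norm_I, mul_one]
        have h2 : ‖(2 : ℂ)‖ = 2 := by norm_num
        have hpi : ‖(Real.pi : ℂ)‖ = Real.pi := by
          rw [Complex.norm_real, Real.norm_eq_abs, abs_of_pos Real.pi_pos]
        rw [h2, hpi]
        have : (1 : ℝ) ≤ ‖(m : ℂ)‖ := by
          rw [Complex.norm_intCast]
          exact_mod_cast Int.one_le_abs hm0
        nlinarith [Real.pi_pos]
      -- the power bound
      have key : ∀ k : ℕ, 0 < k → ‖lam‖ ^ k ≤ Cb * ‖T‖ ^ k := by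
        intro k hkpos
        have h1 : lam ^ k ∈ spectrum ℂ (M ^ k) :=
          spectrum.pow_image_subset M k ⟨lam, hlam, rfl⟩
        have h2 : ‖lam ^ k‖ ≤ ‖M ^ k‖ := spectrum.norm_le_norm_of_mem h1
        rw [norm_pow] at h2
        calc ‖lam‖ ^ k ≤ ‖M ^ k‖ := h2
          _ = ‖ψ (T ^ k)‖ := by rw [map_pow]
          _ ≤ Cb * ‖T ^ k‖ := hCb _
          _ ≤ Cb * ‖T‖ ^ k := by
              have h3 : ‖T ^ k‖ ≤ ‖T‖ ^ k := norm_pow_le' T hkpos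
              have hC0 : (0:ℝ) ≤ Cb := by linarith
              exact mul_le_mul_of_nonneg_left h3 hC0
      -- contradiction
      have hr1 : 1 < ‖lam‖ / ‖T‖ := by
        rw [lt_div_iff₀ hTpos]
        linarith
      obtain ⟨k, hk, hk1⟩ := (((tendsto_pow_atTop_atTop_of_one_lt hr1).eventually_gt_atTop Cb).and
        (Filter.eventually_ge_atTop 1)).exists
      have hle : (‖lam‖ / ‖T‖) ^ k ≤ Cb := by
        rw [div_pow, div_le_iff₀ (by positivity)]
        exact key k hk1
      linarith
  -- M is nilpotent
  have hnil : IsNilpotent M := by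
    have hint : IsIntegral ℂ M := IsIntegral.of_finite ℂ M
    set p := minpoly ℂ M with hp
    have hmonic : p.Monic := minpoly.monic hint
    have hsplit : p.Splits := IsAlgClosed.splits p
    have hroots : ∀ μ ∈ p.roots, μ = 0 := by
      intro μ hμ
      have hroot : IsRoot p μ := isRoot_of_mem_roots hμ
      have hmem : μ ∈ spectrum ℂ M := by
        let eM := Matrix.toLinAlgEquiv' (R := ℂ) (n := Fin n)
        have h1 : IsRoot (minpoly ℂ (eM M)) μ := by
          rwa [minpoly.algEquiv_eq]
        have h2 : Module.End.HasEigenvalue (eM M) μ :=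
          Module.End.hasEigenvalue_iff_isRoot.mpr h1
        have h3 := h2.mem_spectrum
        rwa [AlgEquiv.spectrum_eq] at h3
      exact hspec hmem
    have hpX : p = X ^ (Multiset.card p.roots) := by
      calc p = (p.roots.map fun a => X - C a).prod :=
            hsplit.eq_prod_roots_of_monic hmonic
        _ = (p.roots.map fun _ => (X : ℂ[X])).prod := by
            congr 1
            apply Multiset.map_congr rfl
            intro a ha
            rw [hroots a ha, map_zero, sub_zero]
        _ = X ^ (Multiset.card p.roots) := by
            rw [Multiset.map_const', Multiset.prod_replicate]
    refine ⟨Multiset.card p.roots, ?_⟩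
    have haev := minpoly.aeval ℂ M
    rw [← hp, hpX] at haev
    simpa using haev
  -- conclude
  have hM0 : M = 0 := eq_zero_of_isNilpotent_of_exp_eq_one M hnil hexpM
  exact hinj (by rw [map_zero]; exact hM0)
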